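/- Let β > 0 be a constant and let G : (L^3(O))^n → (L^{3/2}(O))^n be defined by G(u) = β|u|u (pointwise, with |·| the Euclidean norm on R^n). Then G is strictly monotone: for u, w ∈ (L^3(O))^n, ∫_O β(|u|u − |w|w)·(u−w) dx ≥ (β/2)‖u − w‖³_{L^3(O)} ≥ 0, with equality only if u = w in L^3. -/

import Mathlib

open MeasureTheory RealInnerProductSpace
open scoped ENNReal

-- pointwise key inequality
lemma key_ineq {E : Type*} [NormedAddCommGroup E] [InnerProductSpace ℝ E] (x y : E) :
    (1/2) * ‖x - y‖ ^ 3 ≤ ⟪‖x‖ • x - ‖y‖ • y, x - y⟫ := by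
  set a := ‖x‖; set b := ‖y‖; set t := ⟪x, y⟫ with ht
  have hab : t ≤ a * b := real_inner_le_norm x y
  have hc : ⟪y, x⟫ = t := by rw [real_inner_comm, ← ht]
  have h1 : ⟪‖x‖ • x - ‖y‖ • y, x - y⟫ = a^3 + b^3 - (a + b) * t := by
    simp [inner_sub_left, inner_sub_right, inner_smul_left, inner_smul_right,
      real_inner_self_eq_norm_sq, hc, ← ht]
    ring
  have h2 : ‖x - y‖ ^ 2 = a^2 + b^2 - 2 * t := by
    rw [← real_inner_self_eq_norm_sq, inner_sub_sub_self, real_inner_self_eq_norm_sq,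
      real_inner_self_eq_norm_sq, hc, ← ht]; ring
  have h3 : ‖x - y‖ ≤ a + b := norm_sub_le x y
  have hnn : (0:ℝ) ≤ ‖x - y‖ := norm_nonneg _
  rw [h1]
  have h4 : (1/2) * ‖x - y‖ ^ 3 = ‖x - y‖ * ((1/2) * ‖x - y‖^2) := by ring
  rw [h4, h2]
  have h5 : (1/2) * (a^2 + b^2 - 2*t) ≤ a^2 - a*b + b^2 - t := by nlinarith [sq_nonneg (a - b)]
  have h6 : a^3 + b^3 - (a+b)*t = (a + b) * (a^2 - a*b + b^2 - t) := by ring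
  rw [h6]
  have hq : (0:ℝ) ≤ (1/2) * (a^2 + b^2 - 2*t) := by rw [← h2]; positivity
  calc ‖x - y‖ * ((1/2) * (a^2+b^2-2*t)) ≤ (a+b) * ((1/2) * (a^2+b^2-2*t)) := by
        apply mul_le_mul_of_nonneg_right h3 hq
    _ ≤ (a+b) * (a^2 - a*b + b^2 - t) := by
        apply mul_le_mul_of_nonneg_left h5 (by positivity)


/-- The map `G(u) = β|u|u` is strictly monotone from `(L³(O))ⁿ` to `(L^{3/2}(O))ⁿ`:
`∫ β(|u|u − |w|w)·(u−w) ≥ (β/2)‖u−w‖³_{L³} ≥ 0`, with equality only if `u = w` a.e. -/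
theorem betaNormSmul_strictly_monotone
    (d n : ℕ) (O : Set (EuclideanSpace ℝ (Fin d)))
    (hOm : MeasurableSet O) (hObdd : Bornology.IsBounded O)
    (β : ℝ) (hβ : 0 < β)
    (u w : EuclideanSpace ℝ (Fin d) → EuclideanSpace ℝ (Fin n))
    (hu : MemLp u 3 (volume.restrict O)) (hw : MemLp w 3 (volume.restrict O)) :
    0 ≤ (β / 2) * (eLpNorm (u - w) 3 (volume.restrict O)).toReal ^ 3 ∧
    (β / 2) * (eLpNorm (u - w) 3 (volume.restrict O)).toReal ^ 3 ≤
      ∫ x, β * ⟪‖u x‖ • u x - ‖w x‖ • w x, u x - w x⟫ ∂(volume.restrict O) ∧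
    ((∫ x, β * ⟪‖u x‖ • u x - ‖w x‖ • w x, u x - w x⟫ ∂(volume.restrict O)) = 0 →
      u =ᵐ[volume.restrict O] w) := by
  set μ := volume.restrict O with hμ
  set f : EuclideanSpace ℝ (Fin d) → ℝ :=
    fun x => β * ⟪‖u x‖ • u x - ‖w x‖ • w x, u x - w x⟫ with hf
  set g : EuclideanSpace ℝ (Fin d) → ℝ := fun x => (β / 2) * ‖u x - w x‖ ^ 3 with hg
  have huw : MemLp (u - w) 3 μ := hu.sub hw
  -- pointwise bound g ≤ f
  have hgf : ∀ x, g x ≤ f x := by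
    intro x
    have := key_ineq (u x) (w x)
    have h := mul_le_mul_of_nonneg_left this hβ.le
    calc g x = β * ((1/2) * ‖u x - w x‖ ^ 3) := by ring
      _ ≤ f x := h
  -- nonnegativity of g
  have hg0 : ∀ x, 0 ≤ g x := fun x => by positivity
  -- measurability
  have hum := hu.aestronglyMeasurable
  have hwm := hw.aestronglyMeasurable
  have hfm : AEStronglyMeasurable f μ := by
    apply AEStronglyMeasurable.const_mul
    exact AEStronglyMeasurable.inner ((hum.norm.smul hum).sub (hwm.norm.smul hwm))
      (hum.sub hwm)
  -- integrability of ‖u‖³, ‖w‖³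
  have hu3 : Integrable (fun x => ‖u x‖ ^ (3:ℝ)) μ :=
    hu.integrable_norm_rpow (by norm_num) (by norm_num)
  have hw3 : Integrable (fun x => ‖w x‖ ^ (3:ℝ)) μ :=
    hw.integrable_norm_rpow (by norm_num) (by norm_num)
  have hbound : Integrable (fun x => 3 * β * (‖u x‖ ^ (3:ℝ) + ‖w x‖ ^ (3:ℝ))) μ :=
    ((hu3.add hw3).const_mul _)
  have hfi : Integrable f μ := by
    apply Integrable.mono' hbound hfm
    filter_upwards with x
    have hr : ∀ y : EuclideanSpace ℝ (Fin n), ‖y‖ ^ (3:ℝ) = ‖y‖ ^ (3:ℕ) := fun y => by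
      rw [← Real.rpow_natCast ‖y‖ 3]; norm_num
    rw [hf]
    simp only [norm_mul, Real.norm_eq_abs, hr]
    have h1 : |⟪‖u x‖ • u x - ‖w x‖ • w x, u x - w x⟫| ≤
        (‖u x‖ ^ 2 + ‖w x‖ ^ 2) * (‖u x‖ + ‖w x‖) := by
      calc |⟪‖u x‖ • u x - ‖w x‖ • w x, u x - w x⟫|
          ≤ ‖‖u x‖ • u x - ‖w x‖ • w x‖ * ‖u x - w x‖ := abs_real_inner_le_norm _ _
        _ ≤ (‖u x‖ ^ 2 + ‖w x‖ ^ 2) * (‖u x‖ + ‖w x‖) := by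
            apply mul_le_mul _ (norm_sub_le _ _) (norm_nonneg _) (by positivity)
            calc ‖‖u x‖ • u x - ‖w x‖ • w x‖ ≤ ‖‖u x‖ • u x‖ + ‖‖w x‖ • w x‖ := norm_sub_le _ _
              _ = ‖u x‖ ^ 2 + ‖w x‖ ^ 2 := by
                  simp [norm_smul, abs_of_nonneg (norm_nonneg _)]; ring
    rw [abs_of_pos hβ]
    have h2 : (‖u x‖ ^ 2 + ‖w x‖ ^ 2) * (‖u x‖ + ‖w x‖) ≤ 3 * (‖u x‖ ^ 3 + ‖w x‖ ^ 3) := by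
      nlinarith [mul_nonneg (sq_nonneg (‖u x‖ - ‖w x‖)) (by positivity : (0:ℝ) ≤ ‖u x‖ + ‖w x‖),
        pow_nonneg (norm_nonneg (u x)) 3, pow_nonneg (norm_nonneg (w x)) 3]
    have h3 := mul_le_mul_of_nonneg_left (h1.trans h2) hβ.le
    linarith
  -- integrability of g
  have hgi : Integrable g μ := by
    have : Integrable (fun x => ‖(u - w) x‖ ^ (3:ℝ)) μ :=
      huw.integrable_norm_rpow (by norm_num) (by norm_num)
    have := this.const_mul (β / 2)
    apply this.congr
    filter_upwards with x
    simp only [hg, Pi.sub_apply]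
    rw [← Real.rpow_natCast ‖u x - w x‖ 3]
    norm_num
  -- the L³ norm identity
  have hnorm : (eLpNorm (u - w) 3 μ).toReal ^ 3 = ∫ x, ‖u x - w x‖ ^ (3:ℕ) ∂μ := by
    rw [huw.eLpNorm_eq_integral_rpow_norm (by norm_num) (by norm_num)]
    have h3 : ((3:ℝ≥0∞)).toReal = 3 := by norm_num
    rw [h3]
    have hInn : 0 ≤ ∫ a, ‖(u - w) a‖ ^ (3:ℝ) ∂μ :=
      integral_nonneg fun x => by positivity
    rw [ENNReal.toReal_ofReal (by positivity)]
    rw [← Real.rpow_natCast _ 3, ← Real.rpow_mul (by positivity)]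
    norm_num
  have hInt_g : ∫ x, g x ∂μ = (β / 2) * (eLpNorm (u - w) 3 μ).toReal ^ 3 := by
    rw [hnorm, hg, integral_const_mul]
  have hle : ∫ x, g x ∂μ ≤ ∫ x, f x ∂μ :=
    integral_mono hgi hfi hgf
  refine ⟨by positivity, ?_, ?_⟩
  · rw [← hInt_g]; exact hle
  · intro h0
    have hzero : ∫ x, g x ∂μ = 0 := le_antisymm (h0 ▸ hle) (integral_nonneg hg0)
    have := (integral_eq_zero_iff_of_nonneg_ae (ae_of_all _ hg0) hgi).mp hzero
    filter_upwards [this] with x hx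
    have hx' : β / 2 * ‖u x - w x‖ ^ 3 = 0 := by simpa [hg] using hx
    have hb : β / 2 ≠ 0 := by positivity
    have h3 : ‖u x - w x‖ ^ 3 = 0 := (mul_eq_zero.mp hx').resolve_left hb
    have h4 : ‖u x - w x‖ = 0 := pow_eq_zero_iff three_ne_zero |>.mp h3
    exact sub_eq_zero.mp (norm_eq_zero.mp h4)
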